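/- arXiv:2101.10941 — 3 statements merged into one kernel-verified Lean document; each statement's English description precedes it below -/
import Mathlib

section
/- Let W and T be real-valued random variables on a probability space (Ω, 𝓕, P) such that W is integrable, W is independent of T, and E[W] = 0. Then E[W · 1{W ≥ T}] ≥ 0 and E[W · 1{W ≤ T}] ≤ 0. -/
open MeasureTheory ProbabilityTheory

lemma inner_nonneg (μ : Measure ℝ) [IsFiniteMeasure μ]
    (hint : Integrable (fun w : ℝ => w) μ) (hzero : ∫ w, w ∂μ = 0) (t : ℝ) :
    0 ≤ ∫ w in {w : ℝ | t ≤ w}, w ∂μ := by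
  have hs : MeasurableSet {w : ℝ | t ≤ w} := measurableSet_le measurable_const measurable_id
  by_cases h : 0 ≤ t
  · exact setIntegral_nonneg hs (fun w hw => le_trans h hw)
  · push_neg at h
    have hsplit := integral_add_compl hs hint
    rw [hzero] at hsplit
    have hcompl : ∫ w in {w : ℝ | t ≤ w}ᶜ, w ∂μ ≤ 0 := by
      apply setIntegral_nonpos hs.compl
      intro w hw
      simp only [Set.mem_compl_iff, Set.mem_setOf_eq, not_le] at hw
      linarith
    linarith

lemma main_half {Ω : Type*} [MeasurableSpace Ω] (P : Measure Ω) [IsProbabilityMeasure P]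
    (W T : Ω → ℝ) (hWmeas : Measurable W) (hTmeas : Measurable T)
    (hWint : Integrable W P) (hindep : IndepFun W T P)
    (hmean : ∫ ω, W ω ∂P = 0) :
    0 ≤ ∫ ω in {ω | T ω ≤ W ω}, W ω ∂P := by
  set μ := P.map W with hμ
  set ν := P.map T with hν
  have hprodmeas : Measurable (fun ω => (W ω, T ω)) := hWmeas.prodMk hTmeas
  have hmap : P.map (fun ω => (W ω, T ω)) = μ.prod ν :=
    (indepFun_iff_map_prod_eq_prod_map_map hWmeas.aemeasurable hTmeas.aemeasurable).mp hindep
  have hSmeas : MeasurableSet {p : ℝ × ℝ | p.2 ≤ p.1} :=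
    measurableSet_le measurable_snd measurable_fst
  -- move to the product measure
  have h1 : ∫ ω in {ω | T ω ≤ W ω}, W ω ∂P
      = ∫ p in {p : ℝ × ℝ | p.2 ≤ p.1}, p.1 ∂(μ.prod ν) := by
    rw [← hmap, setIntegral_map hSmeas measurable_fst.aestronglyMeasurable
      hprodmeas.aemeasurable]
    rfl
  rw [h1]
  -- integrability of fst on the product
  have hμint : Integrable (fun w : ℝ => w) μ :=
    (integrable_map_measure (g := fun w : ℝ => w) measurable_id.aestronglyMeasurable
      hWmeas.aemeasurable).mpr hWint
  have hμzero : ∫ w, w ∂μ = 0 :=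
    (integral_map (φ := W) (f := fun w : ℝ => w) hWmeas.aemeasurable
      measurable_id.aestronglyMeasurable).trans hmean
  haveI : IsProbabilityMeasure ν := Measure.isProbabilityMeasure_map hTmeas.aemeasurable
  have hfstint : Integrable (fun p : ℝ × ℝ => p.1) (μ.prod ν) := by
    have hm : (μ.prod ν).map Prod.fst = μ := by
      rw [Measure.map_fst_prod]; simp
    have h := (integrable_map_measure (g := fun w : ℝ => w) (f := Prod.fst)
      measurable_id.aestronglyMeasurable measurable_fst.aemeasurable (μ := μ.prod ν)).mp
    rw [hm] at h
    exact h hμint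
  have hindint : Integrable ({p : ℝ × ℝ | p.2 ≤ p.1}.indicator (fun p => p.1)) (μ.prod ν) :=
    hfstint.indicator hSmeas
  rw [← integral_indicator hSmeas, integral_prod_symm _ hindint]
  apply integral_nonneg
  intro t
  simp only [Pi.zero_apply]
  have : ∀ w : ℝ, {p : ℝ × ℝ | p.2 ≤ p.1}.indicator (fun p => p.1) (w, t)
      = {w : ℝ | t ≤ w}.indicator (fun w => w) w := by
    intro w
    by_cases hw : t ≤ w <;>
      simp [Set.indicator, hw]
  simp only [this]
  have hs : MeasurableSet {w : ℝ | t ≤ w} := measurableSet_le measurable_const measurable_id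
  rw [integral_indicator hs]
  exact inner_nonneg μ hμint hμzero t

/-- If `W` is integrable, independent of `T`, and `E[W] = 0`, then
`E[W · 1{W ≥ T}] ≥ 0` and `E[W · 1{W ≤ T}] ≤ 0`. -/
theorem stmt_0 {Ω : Type*} [MeasurableSpace Ω] (P : Measure Ω) [IsProbabilityMeasure P]
    (W T : Ω → ℝ) (hWmeas : Measurable W) (hTmeas : Measurable T)
    (hWint : Integrable W P) (hindep : IndepFun W T P)
    (hmean : ∫ ω, W ω ∂P = 0) :
    (0 ≤ ∫ ω in {ω | T ω ≤ W ω}, W ω ∂P) ∧ (∫ ω in {ω | W ω ≤ T ω}, W ω ∂P ≤ 0) := by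
  constructor
  · exact main_half P W T hWmeas hTmeas hWint hindep hmean
  · have hneg := main_half P (fun ω => -W ω) (fun ω => -T ω)
      hWmeas.neg hTmeas.neg hWint.neg
      (hindep.comp measurable_neg measurable_neg)
      (by rw [integral_neg, hmean, neg_zero])
    have hset : {ω | (fun ω => -T ω) ω ≤ (fun ω => -W ω) ω} = {ω | W ω ≤ T ω} := by
      ext ω; simp
    rw [hset] at hneg
    have : ∫ ω in {ω | W ω ≤ T ω}, -W ω ∂P = -∫ ω in {ω | W ω ≤ T ω}, W ω ∂P :=
      integral_neg _
    linarith [hneg, this.symm ▸ hneg]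
end

section
/- Under the Selection model, let M := (A − Price + ρ·u)/σ. Then almost surely E[ S·(1 − Φ(M))/Φ(M) − (1 − S) | σ(Z) ] ≥ 0. -/
open MeasureTheory ProbabilityTheory
open Real
open scoped ENNReal NNReal

/-- Standard normal density. -/
noncomputable def phi (x : ℝ) : ℝ := (Real.sqrt (2 * Real.pi))⁻¹ * Real.exp (-x ^ 2 / 2)

/-- Standard normal CDF. -/
noncomputable def Phi (x : ℝ) : ℝ := ∫ s in Set.Iic x, phi s

/-- Standard normal hazard function (inverse Mills ratio). -/
noncomputable def lam (x : ℝ) : ℝ := phi x / (1 - Phi x)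

/-- Mills-ratio-type function `φ(x)/Φ(x)`. -/
noncomputable def mills (x : ℝ) : ℝ := phi x / Phi x

lemma phi_eq : phi = gaussianPDFReal 0 1 := by
  ext x
  simp [phi, gaussianPDFReal]

lemma phi_pos (x : ℝ) : 0 < phi x := by
  rw [phi]
  positivity

lemma phi_integrable : Integrable phi := phi_eq ▸ integrable_gaussianPDFReal 0 1

lemma integral_phi : ∫ x, phi x = 1 := by
  rw [phi_eq]; exact integral_gaussianPDFReal_eq_one 0 one_ne_zero

lemma phi_meas : Measurable phi := phi_eq ▸ measurable_gaussianPDFReal 0 1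

lemma Phi_nonneg (x : ℝ) : 0 ≤ Phi x :=
  setIntegral_nonneg measurableSet_Iic fun y _ => (phi_pos y).le

lemma Phi_le_one (x : ℝ) : Phi x ≤ 1 := by
  rw [← integral_phi]
  exact setIntegral_le_integral phi_integrable (ae_of_all _ fun y => (phi_pos y).le)

lemma Phi_pos (x : ℝ) : 0 < Phi x := by
  rw [Phi, setIntegral_pos_iff_support_of_nonneg_ae
    (ae_of_all _ fun y => (phi_pos y).le) phi_integrable.integrableOn]
  have : Function.support phi = Set.univ := by
    ext y; simp [Function.mem_support, (phi_pos y).ne']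
  simp [this]

lemma Phi_mono : Monotone Phi := fun a b hab => by
  exact setIntegral_mono_set phi_integrable.integrableOn
    (ae_of_all _ fun y => (phi_pos y).le)
    (HasSubset.Subset.eventuallyLE (Set.Iic_subset_Iic.2 hab))

lemma Phi_meas : Measurable Phi := Phi_mono.measurable

lemma gauss_Ici {σ : ℝ} (hσ : 0 < σ) (c : ℝ) :
    gaussianReal 0 (Real.toNNReal (σ ^ 2)) (Set.Ici (-c)) = ENNReal.ofReal (Phi (c / σ)) := by
  have hv1 : ((⟨σ^2, sq_nonneg σ⟩ : NNReal) * 1) = Real.toNNReal (σ^2) := by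
    ext; simp [Real.coe_toNNReal _ (sq_nonneg σ)]
  have hmap : (gaussianReal 0 1).map (σ * ·) = gaussianReal 0 (Real.toNNReal (σ^2)) := by
    have := gaussianReal_map_const_mul (μ := 0) (v := 1) σ
    rw [mul_zero] at this; rw [this]; congr 1
  rw [← hmap, Measure.map_apply (measurable_const_mul σ) measurableSet_Ici]
  have hpre : (σ * ·) ⁻¹' Set.Ici (-c) = Set.Ici (-(c/σ)) := by
    ext x
    simp only [Set.mem_preimage, Set.mem_Ici, neg_le]
    rw [le_div_iff₀ hσ]
    constructor <;> intro h <;> nlinarith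
  rw [hpre, gaussianReal_apply_eq_integral 0 one_ne_zero, ← phi_eq]
  congr 1
  rw [MeasureTheory.integral_Ici_eq_integral_Ioi, ← integral_comp_neg_Iic]
  have : ∀ x : ℝ, phi (-x) = phi x := fun x => by simp [phi]
  simp_rw [this]
  rfl

lemma key_lintegral {Ω : Type*} [MeasurableSpace Ω] (P : Measure Ω) [IsProbabilityMeasure P]
    {α : Type*} [MeasurableSpace α] {W : Ω → α} (hW : Measurable W)
    {ξ : Ω → ℝ} (hξmeas : Measurable ξ)
    {σ : ℝ} (hσ : 0 < σ)
    (hξindep : IndepFun ξ W P)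
    (hξlaw : Measure.map ξ P = gaussianReal 0 (Real.toNNReal (σ ^ 2)))
    {V Y : Ω → ℝ} (hV : Measurable[MeasurableSpace.comap W inferInstance] V)
    (hY : Measurable[MeasurableSpace.comap W inferInstance] Y) :
    ∫⁻ ω, ENNReal.ofReal ((if 0 ≤ V ω + ξ ω then (1:ℝ) else 0) * Y ω) ∂P
      = ∫⁻ ω, ENNReal.ofReal (Phi (V ω / σ) * Y ω) ∂P := by
  set T : Ω → ℝ × ℝ := fun ω => (V ω, Y ω) with hT
  have hTcomap : Measurable[MeasurableSpace.comap W inferInstance] T := hV.prodMk hY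
  have hTmeas : Measurable T := hTcomap.mono hW.comap_le le_rfl
  have hindT : IndepFun T ξ P :=
    (indep_of_indep_of_le_right hξindep (measurable_iff_comap_le.mp hTcomap)).symm
  have hprod : P.map (fun ω => (T ω, ξ ω))
      = (P.map T).prod (gaussianReal 0 (Real.toNNReal (σ ^ 2))) := by
    rw [← hξlaw]
    exact (indepFun_iff_map_prod_eq_prod_map_map hTmeas.aemeasurable hξmeas.aemeasurable).mp hindT
  set G : (ℝ × ℝ) × ℝ → ℝ≥0∞ :=
    fun p => (if 0 ≤ p.1.1 + p.2 then (1:ℝ≥0∞) else 0) * ENNReal.ofReal p.1.2 with hG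
  have hGmeas : Measurable G := by
    apply Measurable.mul
    · exact Measurable.ite
        (measurableSet_le measurable_const ((measurable_fst.comp measurable_fst).add measurable_snd))
        measurable_const measurable_const
    · exact ENNReal.measurable_ofReal.comp (measurable_snd.comp measurable_fst)
  have hlhs : (fun ω => ENNReal.ofReal ((if 0 ≤ V ω + ξ ω then (1:ℝ) else 0) * Y ω))
      = fun ω => G ((fun ω => (T ω, ξ ω)) ω) := by
    ext ω
    by_cases h : 0 ≤ V ω + ξ ω <;> simp [hG, hT, h]
  rw [hlhs, ← lintegral_map hGmeas (hTmeas.prodMk hξmeas), hprod, lintegral_prod _ hGmeas.aemeasurable]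
  have hinner : ∀ w : ℝ × ℝ,
      ∫⁻ x, G (w, x) ∂(gaussianReal 0 (Real.toNNReal (σ ^ 2)))
        = ENNReal.ofReal (Phi (w.1 / σ) * w.2) := by
    intro w
    have h1 : (fun x => G (w, x))
        = (Set.Ici (-w.1)).indicator (fun _ => ENNReal.ofReal w.2) := by
      ext x
      rw [Set.indicator_apply]
      simp only [hG, Set.mem_Ici]
      have : (0 ≤ w.1 + x) ↔ (-w.1 ≤ x) := by constructor <;> intro <;> linarith
      rw [if_congr this rfl rfl]
      split_ifs with h <;> simp
    rw [show ∫⁻ x, G (w, x) ∂(gaussianReal 0 (Real.toNNReal (σ ^ 2)))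
        = ∫⁻ x, (Set.Ici (-w.1)).indicator (fun _ => ENNReal.ofReal w.2) x
            ∂(gaussianReal 0 (Real.toNNReal (σ ^ 2))) from by rw [← h1],
      lintegral_indicator measurableSet_Ici, setLIntegral_const,
      gauss_Ici hσ w.1, mul_comm, ← ENNReal.ofReal_mul (Phi_nonneg _)]
  simp_rw [hinner]
  exact lintegral_map (ENNReal.measurable_ofReal.comp
    ((Phi_meas.comp (measurable_fst.div_const σ)).mul measurable_snd)) hTmeas

lemma aux_main {Ω : Type*} [mΩ : MeasurableSpace Ω] (P : Measure Ω) [IsProbabilityMeasure P]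
    {α : Type*} [MeasurableSpace α] {W : Ω → α} (hW : Measurable W)
    {ξ : Ω → ℝ} (hξmeas : Measurable ξ)
    {σ : ℝ} (hσ : 0 < σ)
    (hξindep : IndepFun ξ W P)
    (hξlaw : Measure.map ξ P = gaussianReal 0 (Real.toNNReal (σ ^ 2)))
    {V : Ω → ℝ} (hVW : Measurable[MeasurableSpace.comap W inferInstance] V)
    {m : MeasurableSpace Ω} (hm : m ≤ mΩ)
    (hmW : m ≤ MeasurableSpace.comap W inferInstance) :
    0 ≤ᵐ[P] P[fun ω => (if 0 ≤ V ω + ξ ω then (1:ℝ) else 0) * (1 - Phi (V ω / σ)) / Phi (V ω / σ)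
        - (1 - (if 0 ≤ V ω + ξ ω then (1:ℝ) else 0)) | m] := by
  classical
  letI : MeasurableSpace Ω := mΩ
  have hVmeas : Measurable[mΩ] V := hVW.mono hW.comap_le le_rfl
  have hMW : Measurable[MeasurableSpace.comap W inferInstance] (fun ω => V ω / σ) :=
    hVW.div_const σ
  have hMmeas : Measurable[mΩ] (fun ω => V ω / σ) := hVmeas.div_const σ
  set S' : Ω → ℝ := fun ω => if 0 ≤ V ω + ξ ω then (1:ℝ) else 0 with hS'def
  set g : Ω → ℝ := fun ω => (1 - Phi (V ω / σ)) / Phi (V ω / σ) with hgdef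
  set f : Ω → ℝ := fun ω => S' ω * (1 - Phi (V ω / σ)) / Phi (V ω / σ) - (1 - S' ω) with hfdef
  have hS'meas : Measurable[mΩ] S' :=
    Measurable.ite (measurableSet_le measurable_const (hVmeas.add hξmeas))
      measurable_const measurable_const
  have hS'nn : ∀ ω, 0 ≤ S' ω := fun ω => by rw [hS'def]; dsimp only; split_ifs <;> norm_num
  have hS'le1 : ∀ ω, S' ω ≤ 1 := fun ω => by rw [hS'def]; dsimp only; split_ifs <;> norm_num
  have hgW : Measurable[MeasurableSpace.comap W inferInstance] g :=
    (measurable_const.sub (Phi_meas.comp hMW)).div (Phi_meas.comp hMW)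
  have hgmeas : Measurable[mΩ] g :=
    (measurable_const.sub (Phi_meas.comp hMmeas)).div (Phi_meas.comp hMmeas)
  have hgnn : ∀ ω, 0 ≤ g ω := fun ω =>
    div_nonneg (by linarith [Phi_le_one (V ω / σ)]) (Phi_pos _).le
  have hfmeas : Measurable[mΩ] f := by
    apply Measurable.sub
    · exact ((hS'meas.mul (measurable_const.sub (Phi_meas.comp hMmeas))).div
        (Phi_meas.comp hMmeas))
    · exact measurable_const.sub hS'meas
  have hΦg : ∀ ω, Phi (V ω / σ) * g ω = 1 - Phi (V ω / σ) := fun ω => by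
    rw [hgdef]; dsimp only
    rw [mul_comm, div_mul_cancel₀ _ (Phi_pos _).ne']
  -- integrability of S' * g
  have KEYg := key_lintegral P hW hξmeas hσ hξindep hξlaw hVW hgW
  have hSg_int : Integrable (fun ω => S' ω * g ω) P := by
    refine ⟨(hS'meas.mul hgmeas).aestronglyMeasurable, ?_⟩
    rw [hasFiniteIntegral_iff_ofReal (ae_of_all _ fun ω => mul_nonneg (hS'nn ω) (hgnn ω))]
    calc ∫⁻ ω, ENNReal.ofReal (S' ω * g ω) ∂P
        = ∫⁻ ω, ENNReal.ofReal (Phi (V ω / σ) * g ω) ∂P := KEYg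
      _ = ∫⁻ ω, ENNReal.ofReal (1 - Phi (V ω / σ)) ∂P := by simp_rw [hΦg]
      _ ≤ ∫⁻ _, 1 ∂P := lintegral_mono fun ω =>
          ENNReal.ofReal_le_one.2 (by linarith [Phi_nonneg (V ω / σ)])
      _ = 1 := by simp
      _ < ⊤ := ENNReal.one_lt_top
  have bdd_int : ∀ {h : Ω → ℝ}, Measurable[mΩ] h → (∀ ω, |h ω| ≤ 1) → Integrable h P :=
    fun hmeas hb => (integrable_const (1:ℝ)).mono' hmeas.aestronglyMeasurable
      (ae_of_all _ fun ω => by rw [Real.norm_eq_abs]; exact hb ω)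
  have hf_int : Integrable f P := by
    have h1 : Integrable (fun ω => 1 - S' ω) P :=
      bdd_int (measurable_const.sub hS'meas) fun ω => by
        rw [abs_le]; constructor <;> [linarith [hS'le1 ω]; linarith [hS'nn ω]]
    have h2 : f = fun ω => S' ω * g ω - (1 - S' ω) := by
      funext ω; simp only [hfdef, hgdef]; rw [mul_div_assoc]
    rw [h2]
    exact hSg_int.sub h1
  -- set integrals vanish
  have hset : ∀ s : Set Ω, MeasurableSet[m] s → ∫ x in s, f x ∂P = 0 := by
    intro s hs
    have hsW : MeasurableSet[MeasurableSpace.comap W inferInstance] s := hmW s hs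
    have hs0 : MeasurableSet[mΩ] s := hm s hs
    set χ : Ω → ℝ := s.indicator (fun _ => 1) with hχdef
    have hχW : Measurable[MeasurableSpace.comap W inferInstance] χ :=
      measurable_const.indicator hsW
    have hχmeas : Measurable[mΩ] χ := measurable_const.indicator hs0
    have hχnn : ∀ ω, 0 ≤ χ ω := fun ω => Set.indicator_nonneg (fun _ _ => zero_le_one) ω
    have hχle1 : ∀ ω, χ ω ≤ 1 := fun ω => by
      rw [hχdef]; by_cases hω : ω ∈ s <;> simp [hω]
    -- KEY applications
    have KEY1 := key_lintegral P hW hξmeas hσ hξindep hξlaw hVW (hχW.mul hgW)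
    have KEY2 := key_lintegral P hW hξmeas hσ hξindep hξlaw hVW hχW
    -- integrability facts
    have int_Sχg : Integrable (fun ω => S' ω * (χ ω * g ω)) P := by
      refine hSg_int.mono' ((hS'meas.mul (hχmeas.mul hgmeas)).aestronglyMeasurable)
        (ae_of_all _ fun ω => ?_)
      rw [Real.norm_eq_abs, abs_of_nonneg (mul_nonneg (hS'nn ω) (mul_nonneg (hχnn ω) (hgnn ω)))]
      have h1 : χ ω * g ω ≤ g ω := by
        have := hgnn ω; have := hχle1 ω; have := hχnn ω; nlinarith
      exact mul_le_mul_of_nonneg_left h1 (hS'nn ω)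
    have int_χ : Integrable χ P := bdd_int hχmeas fun ω => by
      rw [abs_of_nonneg (hχnn ω)]; exact hχle1 ω
    have int_Sχ : Integrable (fun ω => S' ω * χ ω) P := bdd_int (hS'meas.mul hχmeas) fun ω => by
      rw [abs_of_nonneg (mul_nonneg (hS'nn ω) (hχnn ω))]
      nlinarith [hS'le1 ω, hχle1 ω, hS'nn ω, hχnn ω]
    have int_χΦ : Integrable (fun ω => χ ω * Phi (V ω / σ)) P :=
      bdd_int (hχmeas.mul (Phi_meas.comp hMmeas)) fun ω => by
        rw [abs_of_nonneg (mul_nonneg (hχnn ω) (Phi_nonneg _))]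
        nlinarith [hχle1 ω, hχnn ω, Phi_le_one (V ω / σ), Phi_nonneg (V ω / σ)]
    have int_Φχg : Integrable (fun ω => Phi (V ω / σ) * (χ ω * g ω)) P := by
      have heq : (fun ω => Phi (V ω / σ) * (χ ω * g ω)) = fun ω => χ ω * (1 - Phi (V ω / σ)) := by
        funext ω
        rw [mul_left_comm, hΦg ω]
      rw [heq]
      exact bdd_int (hχmeas.mul (measurable_const.sub (Phi_meas.comp hMmeas))) fun ω => by
        rw [abs_of_nonneg (mul_nonneg (hχnn ω) (by linarith [Phi_le_one (V ω / σ)]))]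
        nlinarith [hχle1 ω, hχnn ω, Phi_le_one (V ω / σ), Phi_nonneg (V ω / σ)]
    -- Bochner equalities from lintegral equalities
    have e1 : ∫ ω, S' ω * (χ ω * g ω) ∂P = ∫ ω, Phi (V ω / σ) * (χ ω * g ω) ∂P := by
      rw [integral_eq_lintegral_of_nonneg_ae
          (ae_of_all _ fun ω => mul_nonneg (hS'nn ω) (mul_nonneg (hχnn ω) (hgnn ω)))
          int_Sχg.aestronglyMeasurable,
        integral_eq_lintegral_of_nonneg_ae
          (ae_of_all _ fun ω => mul_nonneg (Phi_nonneg _) (mul_nonneg (hχnn ω) (hgnn ω)))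
          int_Φχg.aestronglyMeasurable]
      exact congrArg ENNReal.toReal KEY1
    have e2 : ∫ ω, S' ω * χ ω ∂P = ∫ ω, Phi (V ω / σ) * χ ω ∂P := by
      rw [integral_eq_lintegral_of_nonneg_ae
          (ae_of_all _ fun ω => mul_nonneg (hS'nn ω) (hχnn ω))
          int_Sχ.aestronglyMeasurable,
        integral_eq_lintegral_of_nonneg_ae
          (ae_of_all _ fun ω => mul_nonneg (Phi_nonneg _) (hχnn ω))
          ((Phi_meas.comp hMmeas).mul hχmeas).aestronglyMeasurable, KEY2]
    -- assemble
    have hind : ∫ x in s, f x ∂P = ∫ ω, χ ω * f ω ∂P := by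
      rw [← integral_indicator hs0]
      congr 1
      funext ω
      by_cases hω : ω ∈ s <;> simp [hχdef, hω, Set.indicator_of_mem, Set.indicator_of_notMem]
    have hpt : (fun ω => χ ω * f ω)
        = fun ω => S' ω * (χ ω * g ω) - χ ω + S' ω * χ ω := by
      funext ω
      rw [hfdef, hgdef]; dsimp only; ring
    have intA : Integrable (fun ω => S' ω * (χ ω * g ω) - χ ω) P := int_Sχg.sub int_χ
    rw [hind, hpt, integral_add intA int_Sχ, integral_sub int_Sχg int_χ, e1, e2]
    have e3 : ∫ ω, Phi (V ω / σ) * (χ ω * g ω) ∂P = (∫ ω, χ ω ∂P) - ∫ ω, Phi (V ω / σ) * χ ω ∂P := by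
      have heq : (fun ω => Phi (V ω / σ) * (χ ω * g ω))
          = fun ω => χ ω - Phi (V ω / σ) * χ ω := by
        funext ω
        rw [mul_left_comm, hΦg ω]; ring
      have int_Φχ : Integrable (fun ω => Phi (V ω / σ) * χ ω) P := by
        have : (fun ω => Phi (V ω / σ) * χ ω) = fun ω => χ ω * Phi (V ω / σ) := by
          funext ω; ring
        rw [this]; exact int_χΦ
      rw [heq, integral_sub int_χ int_Φχ]
    rw [e3]; ring
  -- conclude via the characterization of condexp
  have h0 : (fun _ => (0:ℝ)) =ᵐ[P] P[f | m] := by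
    refine ae_eq_condExp_of_forall_setIntegral_eq hm hf_int
      (fun s _ _ => (integrable_const (0:ℝ)).integrableOn) (fun s hs _ => ?_)
      (aestronglyMeasurable_const)
    rw [hset s hs]
    simp
  filter_upwards [h0] with ω h
  exact le_of_eq h

/-- First odds-based moment inequality (ob1_rho). -/
theorem stmt_11
    {Ω : Type*} [MeasurableSpace Ω] (P : Measure Ω) [IsProbabilityMeasure P]
    {k : ℕ} (Z : Ω → (Fin k → ℝ)) (hZmeas : Measurable Z)
    (A B u ξ : Ω → ℝ)
    (hAint : Integrable A P) (hBint : Integrable B P) (huint : Integrable u P)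
    (hAZ : Measurable[MeasurableSpace.comap Z inferInstance] A)
    (hBZ : Measurable[MeasurableSpace.comap Z inferInstance] B)
    (humeas : Measurable u) (hξmeas : Measurable ξ)
    (huZ : P[u | MeasurableSpace.comap Z inferInstance] =ᵐ[P] 0)
    (σ ρ : ℝ) (hσ : 0 < σ)
    (hξindep : IndepFun ξ (fun ω => (Z ω, u ω)) P)
    (hξlaw : Measure.map ξ P = gaussianReal 0 (Real.toNNReal (σ ^ 2)))
    (Price S : Ω → ℝ)
    (hPrice : Price = fun ω => B ω + u ω)
    (hS : S = fun ω => if 0 ≤ A ω - Price ω + ρ * u ω + ξ ω then (1 : ℝ) else 0)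
     :
    0 ≤ᵐ[P] P[fun ω => S ω * (1 - Phi ((A ω - Price ω + ρ * u ω) / σ)) / Phi ((A ω - Price ω + ρ * u ω) / σ)
        - (1 - S ω)
      | MeasurableSpace.comap Z inferInstance] := by
  subst hPrice hS
  have hWmeas : Measurable (fun ω => (Z ω, u ω)) := hZmeas.prodMk humeas
  have hmW : MeasurableSpace.comap Z inferInstance ≤
      MeasurableSpace.comap (fun ω => (Z ω, u ω)) inferInstance := by
    have h1 : MeasurableSpace.comap Z inferInstance =
        MeasurableSpace.comap (fun ω => (Z ω, u ω))
          (MeasurableSpace.comap Prod.fst inferInstance) := by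
      rw [MeasurableSpace.comap_comp]; rfl
    rw [h1]
    exact MeasurableSpace.comap_mono measurable_fst.comap_le
  have huW : Measurable[MeasurableSpace.comap (fun ω => (Z ω, u ω)) inferInstance] u :=
    measurable_snd.comp (comap_measurable _)
  have hVW : Measurable[MeasurableSpace.comap (fun ω => (Z ω, u ω)) inferInstance]
      (fun ω => A ω - (B ω + u ω) + ρ * u ω) :=
    ((hAZ.mono hmW le_rfl).sub ((hBZ.mono hmW le_rfl).add huW)).add (huW.const_mul ρ)
  exact aux_main P hWmeas hξmeas hσ hξindep hξlaw hVW hZmeas.comap_le hmW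
end

section
/- For every c ∈ ℝ, the function f : ℝ → ℝ defined by f(w) = w + λ(c − w), where λ(x) = φ(x)/(1 − Φ(x)) is the standard normal hazard function, is strictly monotone increasing and convex on ℝ. -/
open MeasureTheory ProbabilityTheory

namespace Stmt18

open Real Set Filter Topology

/-! ### Basic facts about `phi` -/

lemma phi_eq : phi = fun x : ℝ => (Real.sqrt (2 * Real.pi))⁻¹ * Real.exp (-(1/2 : ℝ) * x ^ 2) := by
  funext x
  simp only [phi]
  ring_nf

lemma sqrt_two_pi_pos : 0 < Real.sqrt (2 * Real.pi) :=
  Real.sqrt_pos.2 (by positivity)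

lemma phi_pos (x : ℝ) : 0 < phi x := by
  unfold phi; positivity

lemma continuous_phi : Continuous phi := by
  unfold phi; fun_prop

lemma integrable_phi : Integrable phi := by
  rw [phi_eq]
  exact (integrable_exp_neg_mul_sq (by norm_num : (0:ℝ) < 1/2)).const_mul _

lemma integrable_id_phi : Integrable (fun x => x * phi x) := by
  have h := integrable_mul_exp_neg_mul_sq (by norm_num : (0:ℝ) < 1/2)
  have : (fun x => x * phi x) = fun x =>
      (Real.sqrt (2 * Real.pi))⁻¹ * (x * Real.exp (-(1/2 : ℝ) * x ^ 2)) := by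
    funext x; rw [phi_eq]; ring
  rw [this]
  exact h.const_mul _

lemma integral_phi : ∫ x, phi x = 1 := by
  rw [phi_eq]
  rw [integral_const_mul]
  rw [integral_gaussian]
  rw [show Real.pi / (1/2 : ℝ) = 2 * Real.pi by ring]
  exact inv_mul_cancel₀ (ne_of_gt sqrt_two_pi_pos)

lemma hasDerivAt_phi (x : ℝ) : HasDerivAt phi (-x * phi x) x := by
  have h1 : HasDerivAt (fun x : ℝ => -x ^ 2 / 2) (-x) x := by
    have := ((hasDerivAt_pow 2 x).neg).div_const 2
    simpa using this.congr_deriv (by ring)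
  have h2 := (h1.exp).const_mul (Real.sqrt (2 * Real.pi))⁻¹
  have : phi = fun x : ℝ => (Real.sqrt (2 * Real.pi))⁻¹ * Real.exp (-x ^ 2 / 2) := rfl
  rw [this]
  exact h2.congr_deriv (by beta_reduce; ring)

/-! ### The survival function `nB x = 1 - Phi x` -/

noncomputable def nB (x : ℝ) : ℝ := 1 - Phi x

lemma nB_eq (x : ℝ) : nB x = ∫ s in Set.Ioi x, phi s := by
  have h := intervalIntegral.integral_Iic_add_Ioi (b := x) (f := phi) (μ := volume)
    integrable_phi.integrableOn integrable_phi.integrableOn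
  rw [integral_phi] at h
  simp only [nB, Phi]
  linarith

lemma nB_pos (x : ℝ) : 0 < nB x := by
  rw [nB_eq]
  rw [setIntegral_pos_iff_support_of_nonneg_ae]
  · have : (Function.support phi) = Set.univ := by
      ext y; simp [Function.support, ne_of_gt (phi_pos y)]
    rw [this]
    simp [Real.volume_Ioi]
  · exact Filter.Eventually.of_forall fun y => (phi_pos y).le
  · exact integrable_phi.integrableOn

lemma hasDerivAt_Phi (x : ℝ) : HasDerivAt Phi (phi x) x := by
  have key : ∀ y : ℝ, Phi y = Phi 0 + ∫ t in (0:ℝ)..y, phi t := by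
    intro y
    have := intervalIntegral.integral_Iic_sub_Iic (μ := volume) (f := phi)
      integrable_phi.integrableOn integrable_phi.integrableOn (a := 0) (b := y)
    simp only [Phi]
    linarith
  have hD : HasDerivAt (fun y => Phi 0 + ∫ t in (0:ℝ)..y, phi t) (phi x) x := by
    have := (intervalIntegral.integral_hasDerivAt_right
      (integrable_phi.intervalIntegrable (a := 0) (b := x))
      (continuous_phi.stronglyMeasurableAtFilter _ _)
      continuous_phi.continuousAt)
    exact ((hasDerivAt_const x (Phi 0)).add this).congr_deriv (zero_add _)
  exact hD.congr_of_eventuallyEq (Filter.Eventually.of_forall key) |>.congr_deriv rfl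

lemma hasDerivAt_nB (x : ℝ) : HasDerivAt nB (-(phi x)) x :=
  ((hasDerivAt_const x (1:ℝ)).sub (hasDerivAt_Phi x)).congr_deriv (by ring)

lemma tendsto_phi_atTop : Tendsto phi atTop (𝓝 0) := by
  have h1 : Tendsto (fun x : ℝ => -x ^ 2 / 2) atTop atBot := by
    apply Filter.Tendsto.atBot_div_const (by norm_num : (0:ℝ) < 2)
    exact tendsto_neg_atBot_iff.mpr (tendsto_pow_atTop (by norm_num))
  have h2 : Tendsto (fun x : ℝ => Real.exp (-x ^ 2 / 2)) atTop (𝓝 0) :=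
    Real.tendsto_exp_atBot.comp h1
  have := h2.const_mul (Real.sqrt (2 * Real.pi))⁻¹
  simp only [mul_zero] at this
  exact this

lemma integral_Ioi_id_phi (x : ℝ) : ∫ t in Set.Ioi x, t * phi t = phi x := by
  have hlim : Tendsto (fun t => -(phi t)) atTop (𝓝 0) := by
    simpa using tendsto_phi_atTop.neg
  have h := integral_Ioi_of_hasDerivAt_of_tendsto' (a := x)
    (f := fun t => -(phi t)) (f' := fun t => t * phi t)
    (fun t _ => ((hasDerivAt_phi t).neg).congr_deriv (by ring))
    (integrable_id_phi.integrableOn)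
    hlim
  rw [h]; ring

lemma nB_le (x : ℝ) (hx : 0 < x) : x * nB x ≤ phi x := by
  rw [nB_eq, ← integral_Ioi_id_phi x, ← integral_const_mul]
  apply setIntegral_mono_on
  · exact (integrable_phi.const_mul x).integrableOn
  · exact integrable_id_phi.integrableOn
  · exact measurableSet_Ioi
  · intro t ht
    exact mul_le_mul_of_nonneg_right (le_of_lt ht) (phi_pos t).le

lemma tendsto_pow_phi (n : ℕ) : Tendsto (fun x => x ^ n * phi x) atTop (𝓝 0) := by
  have hg : Tendsto (fun x : ℝ => (Real.sqrt (2 * Real.pi))⁻¹ * (x ^ n * Real.exp (-x)))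
      atTop (𝓝 0) := by
    simpa using (tendsto_pow_mul_exp_neg_atTop_nhds_zero n).const_mul (Real.sqrt (2 * Real.pi))⁻¹
  apply squeeze_zero' (g := fun x : ℝ => (Real.sqrt (2 * Real.pi))⁻¹ * (x ^ n * Real.exp (-x)))
  · filter_upwards [eventually_ge_atTop (0:ℝ)] with x hx
    exact mul_nonneg (by positivity) (phi_pos x).le
  · filter_upwards [eventually_ge_atTop (2:ℝ)] with x hx
    have hx0 : (0:ℝ) ≤ x := by linarith
    have hexp : Real.exp (-x ^ 2 / 2) ≤ Real.exp (-x) := by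
      apply Real.exp_le_exp.2; nlinarith
    calc x ^ n * phi x = (Real.sqrt (2 * Real.pi))⁻¹ * (x ^ n * Real.exp (-x ^ 2 / 2)) := by
          simp [phi]; ring
      _ ≤ (Real.sqrt (2 * Real.pi))⁻¹ * (x ^ n * Real.exp (-x)) := by
          apply mul_le_mul_of_nonneg_left _ (by positivity)
          exact mul_le_mul_of_nonneg_left hexp (by positivity)
  · exact hg

lemma nB_le_phi (x : ℝ) (hx : 1 ≤ x) : nB x ≤ phi x := by
  have h := nB_le x (by linarith)
  nlinarith [nB_pos x]

lemma tendsto_nB_atTop : Tendsto nB atTop (𝓝 0) := by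
  apply squeeze_zero' (g := phi)
  · filter_upwards with x; exact (nB_pos x).le
  · filter_upwards [eventually_ge_atTop (1:ℝ)] with x hx
    exact nB_le_phi x hx
  · exact tendsto_phi_atTop

lemma tendsto_pow_nB (n : ℕ) : Tendsto (fun x => x ^ n * nB x) atTop (𝓝 0) := by
  apply squeeze_zero' (g := fun x => x ^ n * phi x)
  · filter_upwards [eventually_ge_atTop (0:ℝ)] with x hx
    exact mul_nonneg (by positivity) (nB_pos x).le
  · filter_upwards [eventually_ge_atTop (1:ℝ)] with x hx
    exact mul_le_mul_of_nonneg_left (nB_le_phi x hx) (by positivity)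
  · exact tendsto_pow_phi n


/-! ### Sign lemmas from derivative and limit at infinity -/

lemma pos_of_hasDerivAt_neg_tendsto {F F' : ℝ → ℝ}
    (hd : ∀ x, HasDerivAt F (F' x) x) (hneg : ∀ x, F' x < 0)
    (hlim : Tendsto F atTop (𝓝 0)) : ∀ x, 0 < F x := by
  intro x
  have hanti : StrictAnti F := strictAnti_of_deriv_neg fun y => by
    rw [(hd y).deriv]; exact hneg y
  have h1 : (0:ℝ) ≤ F (x + 1) := by
    apply le_of_tendsto hlim
    filter_upwards [eventually_ge_atTop (x + 2)] with y hy
    exact (hanti (by linarith : x + 1 < y)).le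
  linarith [hanti (lt_add_one x)]

lemma neg_of_hasDerivAt_pos_tendsto {F F' : ℝ → ℝ}
    (hd : ∀ x, HasDerivAt F (F' x) x) (hpos : ∀ x, 0 < F' x)
    (hlim : Tendsto F atTop (𝓝 0)) : ∀ x, F x < 0 := by
  intro x
  have := pos_of_hasDerivAt_neg_tendsto (F := fun y => -(F y)) (F' := fun y => -(F' y))
    (fun y => (hd y).neg) (fun y => neg_lt_zero.2 (hpos y)) (by simpa using hlim.neg) x
  linarith

/-! ### The iterated Mills bounds cascade -/

noncomputable def G1 (x : ℝ) : ℝ := phi x - x * nB x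
noncomputable def G2 (x : ℝ) : ℝ := (x ^ 2 + 1) * nB x - x * phi x
noncomputable def G3 (x : ℝ) : ℝ := (x ^ 2 + 2) * phi x - (x ^ 3 + 3 * x) * nB x
noncomputable def G4 (x : ℝ) : ℝ := (x ^ 4 + 6 * x ^ 2 + 3) * nB x - (x ^ 3 + 5 * x) * phi x
noncomputable def G5 (x : ℝ) : ℝ :=
  (x ^ 4 + 9 * x ^ 2 + 8) * phi x - (x ^ 5 + 10 * x ^ 3 + 15 * x) * nB x

lemma hasDerivAt_G1 (x : ℝ) : HasDerivAt G1 (-(1 * nB x)) x := by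
  have h := (hasDerivAt_phi x).sub ((hasDerivAt_id' x).mul (hasDerivAt_nB x))
  exact h.congr_deriv (by ring)

lemma hasDerivAt_G2 (x : ℝ) : HasDerivAt G2 (-(2 * G1 x)) x := by
  have h := (((hasDerivAt_pow 2 x).add_const 1).mul (hasDerivAt_nB x)).sub
    ((hasDerivAt_id' x).mul (hasDerivAt_phi x))
  exact h.congr_deriv (by unfold G1; push_cast; ring)

lemma hasDerivAt_G3 (x : ℝ) : HasDerivAt G3 (-(3 * G2 x)) x := by
  have h := (((hasDerivAt_pow 2 x).add_const 2).mul (hasDerivAt_phi x)).sub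
    (((hasDerivAt_pow 3 x).add ((hasDerivAt_id' x).const_mul 3)).mul (hasDerivAt_nB x))
  exact h.congr_deriv (by unfold G2; push_cast; simp only [Pi.add_apply]; ring)

lemma hasDerivAt_G4 (x : ℝ) : HasDerivAt G4 (-(4 * G3 x)) x := by
  have h := ((((hasDerivAt_pow 4 x).add ((hasDerivAt_pow 2 x).const_mul 6)).add_const 3).mul
      (hasDerivAt_nB x)).sub
    (((hasDerivAt_pow 3 x).add ((hasDerivAt_id' x).const_mul 5)).mul (hasDerivAt_phi x))
  exact h.congr_deriv (by unfold G3; push_cast; simp only [Pi.add_apply]; ring)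

lemma hasDerivAt_G5 (x : ℝ) : HasDerivAt G5 (-(5 * G4 x)) x := by
  have h := ((((hasDerivAt_pow 4 x).add ((hasDerivAt_pow 2 x).const_mul 9)).add_const 8).mul
      (hasDerivAt_phi x)).sub
    ((((hasDerivAt_pow 5 x).add ((hasDerivAt_pow 3 x).const_mul 10)).add
      ((hasDerivAt_id' x).const_mul 15)).mul (hasDerivAt_nB x))
  exact h.congr_deriv (by unfold G4; push_cast; simp only [Pi.add_apply]; ring)

lemma tendsto_G1 : Tendsto G1 atTop (𝓝 0) := by
  have h0 : G1 = fun x => phi x - x ^ 1 * nB x := by funext x; unfold G1; ring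
  rw [h0]; simpa using tendsto_phi_atTop.sub (tendsto_pow_nB 1)

lemma tendsto_G2 : Tendsto G2 atTop (𝓝 0) := by
  have h0 : G2 = fun x => (x ^ 2 * nB x + 1 * (x ^ 0 * nB x)) - x ^ 1 * phi x := by
    funext x; unfold G2; ring
  rw [h0]
  simpa using ((tendsto_pow_nB 2).add ((tendsto_pow_nB 0).const_mul 1)).sub (tendsto_pow_phi 1)

lemma tendsto_G3 : Tendsto G3 atTop (𝓝 0) := by
  have h0 : G3 = fun x => (x ^ 2 * phi x + 2 * (x ^ 0 * phi x)) -
      (x ^ 3 * nB x + 3 * (x ^ 1 * nB x)) := by funext x; unfold G3; ring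
  rw [h0]
  simpa using ((tendsto_pow_phi 2).add ((tendsto_pow_phi 0).const_mul 2)).sub
    ((tendsto_pow_nB 3).add ((tendsto_pow_nB 1).const_mul 3))

lemma tendsto_G4 : Tendsto G4 atTop (𝓝 0) := by
  have h0 : G4 = fun x => ((x ^ 4 * nB x + 6 * (x ^ 2 * nB x)) + 3 * (x ^ 0 * nB x)) -
      (x ^ 3 * phi x + 5 * (x ^ 1 * phi x)) := by funext x; unfold G4; ring
  rw [h0]
  simpa using (((tendsto_pow_nB 4).add ((tendsto_pow_nB 2).const_mul 6)).add
    ((tendsto_pow_nB 0).const_mul 3)).sub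
    ((tendsto_pow_phi 3).add ((tendsto_pow_phi 1).const_mul 5))

lemma tendsto_G5 : Tendsto G5 atTop (𝓝 0) := by
  have h0 : G5 = fun x => ((x ^ 4 * phi x + 9 * (x ^ 2 * phi x)) + 8 * (x ^ 0 * phi x)) -
      ((x ^ 5 * nB x + 10 * (x ^ 3 * nB x)) + 15 * (x ^ 1 * nB x)) := by
    funext x; unfold G5; ring
  rw [h0]
  simpa using (((tendsto_pow_phi 4).add ((tendsto_pow_phi 2).const_mul 9)).add
    ((tendsto_pow_phi 0).const_mul 8)).sub
    (((tendsto_pow_nB 5).add ((tendsto_pow_nB 3).const_mul 10)).add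
      ((tendsto_pow_nB 1).const_mul 15))

lemma G1_pos : ∀ x, 0 < G1 x :=
  pos_of_hasDerivAt_neg_tendsto hasDerivAt_G1
    (fun y => by linarith [nB_pos y]) tendsto_G1

lemma G2_pos : ∀ x, 0 < G2 x :=
  pos_of_hasDerivAt_neg_tendsto hasDerivAt_G2
    (fun y => neg_lt_zero.2 (by linarith [G1_pos y])) tendsto_G2

lemma G3_pos : ∀ x, 0 < G3 x :=
  pos_of_hasDerivAt_neg_tendsto hasDerivAt_G3
    (fun y => neg_lt_zero.2 (by linarith [G2_pos y])) tendsto_G3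

lemma G4_pos : ∀ x, 0 < G4 x :=
  pos_of_hasDerivAt_neg_tendsto hasDerivAt_G4
    (fun y => neg_lt_zero.2 (by linarith [G3_pos y])) tendsto_G4

lemma G5_pos : ∀ x, 0 < G5 x :=
  pos_of_hasDerivAt_neg_tendsto hasDerivAt_G5
    (fun y => neg_lt_zero.2 (by linarith [G4_pos y])) tendsto_G5

/-! ### The function `M` controlling monotonicity -/

noncomputable def M (x : ℝ) : ℝ := phi x * phi x - x * phi x * nB x - nB x * nB x

lemma hasDerivAt_M (x : ℝ) : HasDerivAt M (phi x * G2 x) x := by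
  have h := (((hasDerivAt_phi x).mul (hasDerivAt_phi x)).sub
      (((hasDerivAt_id' x).mul (hasDerivAt_phi x)).mul (hasDerivAt_nB x))).sub
    ((hasDerivAt_nB x).mul (hasDerivAt_nB x))
  exact h.congr_deriv (by unfold G2; simp only [Pi.mul_apply]; ring)

lemma tendsto_M : Tendsto M atTop (𝓝 0) := by
  have h0 : M = fun x => phi x * phi x - (x ^ 1 * phi x) * nB x - nB x * nB x := by
    funext x; unfold M; ring
  rw [h0]
  simpa using ((tendsto_phi_atTop.mul tendsto_phi_atTop).sub
    ((tendsto_pow_phi 1).mul tendsto_nB_atTop)).sub (tendsto_nB_atTop.mul tendsto_nB_atTop)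

lemma M_neg : ∀ x, M x < 0 :=
  neg_of_hasDerivAt_pos_tendsto hasDerivAt_M
    (fun y => mul_pos (phi_pos y) (G2_pos y)) tendsto_M


/-! ### The hazard function and `g x = lam x - x` -/

lemma lam_def (x : ℝ) : lam x = phi x / nB x := rfl

lemma lam_pos (x : ℝ) : 0 < lam x := div_pos (phi_pos x) (nB_pos x)

lemma hasDerivAt_lam (x : ℝ) : HasDerivAt lam (lam x ^ 2 - x * lam x) x := by
  have h := (hasDerivAt_phi x).div (hasDerivAt_nB x) (ne_of_gt (nB_pos x))
  have hfun : (phi / nB) = lam := rfl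
  rw [hfun] at h
  apply h.congr_deriv
  rw [lam_def]
  have hb : nB x ≠ 0 := ne_of_gt (nB_pos x)
  field_simp
  ring

noncomputable def g (x : ℝ) : ℝ := lam x - x

lemma g_pos (x : ℝ) : 0 < g x := by
  have h1 := G1_pos x
  unfold G1 at h1
  have : x < phi x / nB x := (lt_div_iff₀ (nB_pos x)).2 (by linarith)
  unfold g; rw [lam_def]; linarith

lemma hasDerivAt_g (x : ℝ) : HasDerivAt g (g x ^ 2 + x * g x - 1) x := by
  have h := (hasDerivAt_lam x).sub (hasDerivAt_id' x)
  exact h.congr_deriv (by unfold g; ring)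

lemma gd_neg (x : ℝ) : g x ^ 2 + x * g x - 1 < 0 := by
  have hb : nB x ≠ 0 := ne_of_gt (nB_pos x)
  have key : (g x ^ 2 + x * g x - 1) * (nB x * nB x) = M x := by
    unfold g M
    rw [lam_def]
    field_simp
    ring
  nlinarith [M_neg x, mul_pos (nB_pos x) (nB_pos x)]

/-! ### The convexity quantity `q` -/

noncomputable def q (x : ℝ) : ℝ := 2 * g x ^ 2 + x * g x - 1

noncomputable def qd (x : ℝ) : ℝ :=
  2 * (2 * g x ^ 1 * (g x ^ 2 + x * g x - 1)) + (g x + x * (g x ^ 2 + x * g x - 1))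

lemma hasDerivAt_q (x : ℝ) : HasDerivAt q (qd x) x := by
  have hg := hasDerivAt_g x
  have h := (((hg.pow 2).const_mul 2).add ((hasDerivAt_id' x).mul hg)).sub_const 1
  apply h.congr_deriv
  unfold qd
  push_cast
  ring

lemma q_mul_nB_sq (x : ℝ) : q x * (nB x * nB x) =
    2 * phi x ^ 2 - 3 * x * phi x * nB x + (x ^ 2 - 1) * nB x ^ 2 := by
  have hb : nB x ≠ 0 := ne_of_gt (nB_pos x)
  unfold q g
  rw [lam_def]
  field_simp
  ring

lemma q_pos_of_two_le {x : ℝ} (hx : 2 ≤ x) : 0 < q x := by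
  have h5 := G5_pos x
  unfold G5 at h5
  set v := phi x with hv
  set b := nB x with hb
  have hvpos : 0 < v := phi_pos x
  have hbpos : 0 < b := nB_pos x
  have hx2 : (4:ℝ) ≤ x ^ 2 := by nlinarith
  have h5' : (x ^ 5 + 10 * x ^ 3 + 15 * x) * b < (x ^ 4 + 9 * x ^ 2 + 8) * v := by linarith
  have hP : 0 < 2 * v ^ 2 - 3 * x * v * b + (x ^ 2 - 1) * b ^ 2 := by
    have hx1 : (0:ℝ) < x ^ 2 - 1 := by nlinarith
    have hbr : 0 < (3 * x * (x ^ 5 + 10 * x ^ 3 + 15 * x)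
        - (x ^ 2 - 1) * (x ^ 4 + 9 * x ^ 2 + 8)) * v
        - (x ^ 2 - 1) * ((x ^ 5 + 10 * x ^ 3 + 15 * x) * b) := by
      have h1 : (x ^ 2 - 1) * ((x ^ 5 + 10 * x ^ 3 + 15 * x) * b)
          < (x ^ 2 - 1) * ((x ^ 4 + 9 * x ^ 2 + 8) * v) :=
        mul_lt_mul_of_pos_left h5' hx1
      have h2 : (x ^ 6 + 14 * x ^ 4 + 47 * x ^ 2 + 16) * v
          = (3 * x * (x ^ 5 + 10 * x ^ 3 + 15 * x)
            - (x ^ 2 - 1) * (x ^ 4 + 9 * x ^ 2 + 8)) * v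
            - (x ^ 2 - 1) * ((x ^ 4 + 9 * x ^ 2 + 8) * v) := by ring
      nlinarith [mul_pos (by positivity : (0:ℝ) < x ^ 6 + 14 * x ^ 4 + 47 * x ^ 2 + 16) hvpos]
    have hDelta : (0:ℝ) ≤ (x ^ 2 - 1) * (x ^ 4 + 9 * x ^ 2 + 8) ^ 2
        - 3 * x * (x ^ 4 + 9 * x ^ 2 + 8) * (x ^ 5 + 10 * x ^ 3 + 15 * x)
        + 2 * (x ^ 5 + 10 * x ^ 3 + 15 * x) ^ 2 := by
      have hexp : (x ^ 2 - 1) * (x ^ 4 + 9 * x ^ 2 + 8) ^ 2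
          - 3 * x * (x ^ 4 + 9 * x ^ 2 + 8) * (x ^ 5 + 10 * x ^ 3 + 15 * x)
          + 2 * (x ^ 5 + 10 * x ^ 3 + 15 * x) ^ 2 = 2 * x ^ 4 + 10 * x ^ 2 - 64 := by ring
      rw [hexp]
      nlinarith
    have hiden : (x ^ 5 + 10 * x ^ 3 + 15 * x) ^ 2
        * (2 * v ^ 2 - 3 * x * v * b + (x ^ 2 - 1) * b ^ 2)
        = ((x ^ 2 - 1) * (x ^ 4 + 9 * x ^ 2 + 8) ^ 2
            - 3 * x * (x ^ 4 + 9 * x ^ 2 + 8) * (x ^ 5 + 10 * x ^ 3 + 15 * x)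
            + 2 * (x ^ 5 + 10 * x ^ 3 + 15 * x) ^ 2) * v ^ 2
          + ((x ^ 4 + 9 * x ^ 2 + 8) * v - (x ^ 5 + 10 * x ^ 3 + 15 * x) * b)
            * ((3 * x * (x ^ 5 + 10 * x ^ 3 + 15 * x)
                - (x ^ 2 - 1) * (x ^ 4 + 9 * x ^ 2 + 8)) * v
              - (x ^ 2 - 1) * ((x ^ 5 + 10 * x ^ 3 + 15 * x) * b)) := by ring
    have hq5 : (0:ℝ) < (x ^ 5 + 10 * x ^ 3 + 15 * x) ^ 2 := by positivity
    nlinarith [mul_pos (sub_pos.2 h5') hbr, mul_nonneg hDelta (sq_nonneg v)]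
  have key := q_mul_nB_sq x
  rw [← hv, ← hb] at key
  nlinarith [mul_pos hbpos hbpos]


/-! ### Global positivity of `q` via the downcrossing argument -/

lemma qd_eq_of_q_zero {z : ℝ} (h0 : q z = 0) : qd z = -2 * g z ^ 3 := by
  unfold q at h0
  unfold qd
  linear_combination (3 * g z + z) * h0

lemma continuous_q : Continuous q :=
  continuous_iff_continuousAt.2 fun x => (hasDerivAt_q x).continuousAt

lemma q_pos : ∀ x, 0 < q x := by
  by_contra hcon
  push_neg at hcon
  obtain ⟨x₀, hx₀⟩ := hcon
  have hx₀2 : x₀ < 2 := by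
    by_contra hge
    push_neg at hge
    exact absurd hx₀ (not_le.2 (q_pos_of_two_le hge))
  set S := {x | x ∈ Icc x₀ 2 ∧ q x ≤ 0} with hS
  have hSne : S.Nonempty := ⟨x₀, ⟨le_refl _, hx₀2.le⟩, hx₀⟩
  have hScl : IsClosed S := by
    apply IsClosed.inter isClosed_Icc
    exact isClosed_le continuous_q continuous_const
  have hSbd : BddAbove S := ⟨2, fun y hy => hy.1.2⟩
  set z := sSup S with hz
  have hzS : z ∈ S := hScl.csSup_mem hSne hSbd
  have hz2 : z < 2 := by
    rcases lt_or_eq_of_le hzS.1.2 with h | h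
    · exact h
    · exact absurd (h ▸ hzS.2) (not_le.2 (q_pos_of_two_le (le_of_eq h.symm)))
  have hq_gt : ∀ y, z < y → y ≤ 2 → 0 < q y := by
    intro y hzy hy2
    by_contra hneg
    push_neg at hneg
    have hyS : y ∈ S := ⟨⟨le_trans hzS.1.1 hzy.le, hy2⟩, hneg⟩
    exact absurd (le_csSup hSbd hyS) (not_le.2 hzy)
  have hqz : q z = 0 := by
    rcases lt_or_eq_of_le hzS.2 with hlt | heq
    · exfalso
      have hev : ∀ᶠ y in 𝓝 z, q y < 0 :=
        (continuous_q.tendsto z).eventually_lt_const hlt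
      have hev' : ∀ᶠ y in 𝓝[>] z, q y < 0 := hev.filter_mono nhdsWithin_le_nhds
      have hmem : Ioo z 2 ∈ 𝓝[>] z := Ioo_mem_nhdsGT_of_mem ⟨le_refl z, hz2⟩
      obtain ⟨y, hy1, hy2⟩ := (hev'.and (eventually_of_mem hmem fun y hy => hy)).exists
      exact absurd hy1 (not_lt.2 (hq_gt y hy2.1 hy2.2.le).le)
    · exact heq
  have hqdneg : qd z < 0 := by
    rw [qd_eq_of_q_zero hqz]
    nlinarith [pow_pos (g_pos z) 3]
  have hs := hasDerivAt_iff_tendsto_slope.1 (hasDerivAt_q z)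
  have hev : ∀ᶠ y in 𝓝[≠] z, slope q z y < 0 := hs.eventually_lt_const hqdneg
  have hev2 : ∀ᶠ y in 𝓝[>] z, slope q z y < 0 :=
    hev.filter_mono (nhdsWithin_mono z fun y hy => ne_of_gt hy)
  have hmem : Ioo z 2 ∈ 𝓝[>] z := Ioo_mem_nhdsGT_of_mem ⟨le_refl z, hz2⟩
  obtain ⟨y, hy1, hy2⟩ := (hev2.and (eventually_of_mem hmem fun y hy => hy)).exists
  have hyz : 0 < y - z := sub_pos.2 hy2.1
  rw [slope_def_field, hqz, sub_zero] at hy1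
  have hqy : q y < 0 := by
    rcases div_neg_iff.1 hy1 with ⟨_, hc⟩ | ⟨hc, _⟩
    · linarith
    · exact hc
  exact absurd hqy (not_lt.2 (hq_gt y hy2.1 hy2.2.le).le)

/-! ### Monotonicity and convexity of `g` -/

noncomputable def gd (x : ℝ) : ℝ := g x ^ 2 + x * g x - 1

lemma hasDerivAt_gd (x : ℝ) : HasDerivAt gd (lam x * q x) x := by
  have hg := hasDerivAt_g x
  have h := ((hg.pow 2).add ((hasDerivAt_id' x).mul hg)).sub_const 1
  apply h.congr_deriv
  have hl : lam x = g x + x := by unfold g; ring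
  rw [hl]
  unfold q
  push_cast
  ring

lemma g_differentiable : Differentiable ℝ g := fun x => (hasDerivAt_g x).differentiableAt

lemma deriv_g : deriv g = gd := funext fun x => by
  rw [(hasDerivAt_g x).deriv]; rfl

lemma gd_strictMono : StrictMono gd :=
  strictMono_of_deriv_pos fun x => by
    rw [(hasDerivAt_gd x).deriv]
    exact mul_pos (lam_pos x) (q_pos x)

lemma convexOn_g : ConvexOn ℝ Set.univ g :=
  Monotone.convexOn_univ_of_deriv g_differentiable
    (by rw [deriv_g]; exact gd_strictMono.monotone)

lemma g_strictAnti : StrictAnti g :=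
  strictAnti_of_deriv_neg fun x => by
    rw [(hasDerivAt_g x).deriv]
    exact gd_neg x

end Stmt18

/-- for every `c`, `w ↦ w + λ(c − w)` is strictly increasing and convex. -/
theorem stmt_18 (c : ℝ) :
    StrictMono (fun w => w + lam (c - w)) ∧ ConvexOn ℝ Set.univ (fun w => w + lam (c - w)) := by
  have hfun : ∀ w : ℝ, w + lam (c - w) = c + Stmt18.g (c - w) := by
    intro w; unfold Stmt18.g; ring
  constructor
  · intro a b hab
    show a + lam (c - a) < b + lam (c - b)
    rw [hfun a, hfun b]
    have := Stmt18.g_strictAnti (show c - b < c - a by linarith)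
    linarith
  · refine ⟨convex_univ, ?_⟩
    intro a _ b _ μ ν hμ hν hμν
    show (μ • a + ν • b) + lam (c - (μ • a + ν • b)) ≤
      μ • (a + lam (c - a)) + ν • (b + lam (c - b))
    simp only [smul_eq_mul]
    rw [hfun, hfun, hfun]
    have harg : c - (μ * a + ν * b) = μ * (c - a) + ν * (c - b) := by
      linear_combination (-c) * hμν
    rw [harg]
    have hcv := Stmt18.convexOn_g.2 (Set.mem_univ (c - a)) (Set.mem_univ (c - b)) hμ hν hμν
    simp only [smul_eq_mul] at hcv
    have hrhs : μ * (c + Stmt18.g (c - a)) + ν * (c + Stmt18.g (c - b)) =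
        (μ * c + ν * c) + (μ * Stmt18.g (c - a) + ν * Stmt18.g (c - b)) := by ring
    have hc : μ * c + ν * c = c := by linear_combination c * hμν
    rw [hrhs, hc]
    linarith [hcv]
end
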